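/- Let p be an odd prime and k a nonnegative integer. Then B_{p-1}^{(-k)} ≡ 1 (mod p) if k = 0 or k is not divisible by p-1, and B_{p-1}^{(-k)} ≡ 2 (mod p) if k ≠ 0 and k is divisible by p-1. -/
import Mathlib

/-- Stirling numbers of the second kind. -/
def stirling2 : ℕ → ℕ → ℕ
  | 0, 0 => 1
  | 0, _ + 1 => 0
  | _ + 1, 0 => 0
  | n + 1, m + 1 => (m + 1) * stirling2 n (m + 1) + stirling2 n m

/-- The poly-Bernoulli number `B_n^{(-k)}` with negative upper index `-k`. -/
def polyBernoulliB (k n : ℕ) : ℤ :=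
  (-1 : ℤ) ^ n * ∑ m ∈ Finset.range (n + 1),
    (-1 : ℤ) ^ m * (m.factorial : ℤ) * (stirling2 n m : ℤ) * ((m : ℤ) + 1) ^ k

/-- The poly-Bernoulli number of type C, `C_n^{(-k)}`, with negative upper index `-k`. -/
def polyBernoulliC (k n : ℕ) : ℤ :=
  (-1 : ℤ) ^ n * ∑ m ∈ Finset.range (n + 1),
    (-1 : ℤ) ^ m * (m.factorial : ℤ) * (stirling2 (n + 1) (m + 1) : ℤ) * ((m : ℤ) + 1) ^ k

lemma stirling2_sum (n m : ℕ) :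
    (-1:ℤ)^m * m.factorial * stirling2 n m
      = ∑ l ∈ Finset.range (m+1), (-1:ℤ)^l * (m.choose l) * (l:ℤ)^n := by
  induction n generalizing m with
  | zero =>
    cases m with
    | zero => simp [stirling2]
    | succ m =>
      simp only [pow_zero, mul_one, stirling2, Nat.cast_zero, mul_zero]
      rw [Int.alternating_sum_range_choose_of_ne (Nat.succ_ne_zero m)]
  | succ n ih =>
    cases m with
    | zero => simp [stirling2]
    | succ m =>
      have key : ∀ (f : ℕ → ℤ), ∑ l ∈ Finset.range (m+2), f l = f 0 + ∑ j ∈ Finset.range (m+1), f (j+1) := by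
        intro f; rw [Finset.sum_range_succ' f (m+1)]; ring
      have hL : ∑ l ∈ Finset.range (m+2), (-1:ℤ)^l * ((m+1).choose l) * (l:ℤ)^(n+1)
          = -((m+1) * ∑ j ∈ Finset.range (m+1), (-1:ℤ)^j * (m.choose j) * ((j:ℤ)+1)^n) := by
        rw [key, Finset.mul_sum, ← Finset.sum_neg_distrib]
        simp only [Nat.cast_zero, ne_eq]
        rw [show ((0:ℤ))^(n+1) = 0 from by simp, mul_zero, zero_add]
        refine Finset.sum_congr rfl fun j hj => ?_
        have hc : ((j:ℤ)+1) * ((m+1).choose (j+1)) = (m+1) * (m.choose j) := by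
          have := Nat.add_one_mul_choose_eq m j
          have : ((m+1) * m.choose j : ℤ) = ((m+1).choose (j+1) * (j+1) : ℕ) := by
            exact_mod_cast congrArg (Nat.cast : ℕ → ℤ) this
          push_cast at this ⊢
          linarith
        have : ((j:ℤ)+1)^(n+1) = ((j:ℤ)+1) * ((j:ℤ)+1)^n := by ring
        push_cast
        rw [this, pow_succ (-1:ℤ) j]
        calc (-1:ℤ)^j * -1 * ((m+1).choose (j+1)) * (((j:ℤ)+1) * ((j:ℤ)+1)^n)
            = -((-1:ℤ)^j * ((((j:ℤ)+1) * ((m+1).choose (j+1)))) * ((j:ℤ)+1)^n) := by ring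
          _ = -(((m:ℤ)+1) * ((-1)^j * (m.choose j) * ((j:ℤ)+1)^n)) := by rw [hc]; ring
      have hR : (∑ l ∈ Finset.range (m+2), (-1:ℤ)^l * ((m+1).choose l) * (l:ℤ)^n)
            - (∑ l ∈ Finset.range (m+1), (-1:ℤ)^l * (m.choose l) * (l:ℤ)^n)
          = -∑ j ∈ Finset.range (m+1), (-1:ℤ)^j * (m.choose j) * ((j:ℤ)+1)^n := by
        have hext : (∑ l ∈ Finset.range (m+1), (-1:ℤ)^l * (m.choose l) * (l:ℤ)^n)
            = ∑ l ∈ Finset.range (m+2), (-1:ℤ)^l * (m.choose l) * (l:ℤ)^n := by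
          rw [Finset.sum_range_succ (fun l => (-1:ℤ)^l * (m.choose l) * (l:ℤ)^n) (m+1)]
          simp [Nat.choose_succ_self]
        rw [hext, ← Finset.sum_sub_distrib, key]
        have h0 : ((-1:ℤ)^0 * ((m+1).choose 0) * (0:ℤ)^n - (-1:ℤ)^0 * (m.choose 0) * (0:ℤ)^n) = 0 := by
          simp
        push_cast at h0 ⊢
        rw [h0, zero_add, ← Finset.sum_neg_distrib]
        refine Finset.sum_congr rfl fun j hj => ?_
        have hp : (((m+1).choose (j+1) : ℕ) : ℤ) = (m.choose j : ℤ) + (m.choose (j+1) : ℤ) := by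
          rw [Nat.choose_succ_succ]; push_cast; ring
        rw [hp, pow_succ (-1:ℤ) j]
        ring
      have hrec : ((stirling2 (n+1) (m+1) : ℕ) : ℤ)
          = ((m:ℤ)+1) * stirling2 n (m+1) + stirling2 n m := by
        rw [show stirling2 (n+1) (m+1) = (m + 1) * stirling2 n (m + 1) + stirling2 n m from rfl]
        push_cast; ring
      calc (-1:ℤ)^(m+1) * (m+1).factorial * stirling2 (n+1) (m+1)
          = ((m:ℤ)+1) * ((-1:ℤ)^(m+1) * (m+1).factorial * stirling2 n (m+1)
              - (-1:ℤ)^m * m.factorial * stirling2 n m) := by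
            rw [hrec, Nat.factorial_succ]; push_cast; ring
        _ = ((m:ℤ)+1) * ((∑ l ∈ Finset.range (m+2), (-1:ℤ)^l * ((m+1).choose l) * (l:ℤ)^n)
              - (∑ l ∈ Finset.range (m+1), (-1:ℤ)^l * (m.choose l) * (l:ℤ)^n)) := by
            rw [ih (m+1), ih m]
        _ = ((m:ℤ)+1) * (-∑ j ∈ Finset.range (m+1), (-1:ℤ)^j * (m.choose j) * ((j:ℤ)+1)^n) := by
            rw [hR]
        _ = ∑ l ∈ Finset.range (m+2), (-1:ℤ)^l * ((m+1).choose l) * (l:ℤ)^(n+1) := by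
            rw [hL]; ring

lemma sum_range_cast (p : ℕ) [NeZero p] (g : ZMod p → ZMod p) :
    ∑ i ∈ Finset.range p, g (i : ZMod p) = ∑ x : ZMod p, g x := by
  refine Finset.sum_nbij' (fun i => (i : ZMod p)) (fun x => x.val) ?_ ?_ ?_ ?_ ?_
  · intro i hi; exact Finset.mem_univ _
  · intro x hx; exact Finset.mem_range.mpr (ZMod.val_lt x)
  · intro i hi; exact ZMod.val_cast_of_lt (Finset.mem_range.mp hi)
  · intro x hx; exact ZMod.natCast_rightInverse x
  · intro i hi; rfl

lemma main_cast (p : ℕ) [hpf : Fact p.Prime] (hodd : Odd p) (k : ℕ) :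
    ((polyBernoulliB k (p-1) : ℤ) : ZMod p) = 1 - ∑ x : ZMod p, x^k := by
  have hp := hpf.out
  have hp3 : 3 ≤ p := by
    rcases hodd with ⟨t, ht⟩; have := hp.two_le; omega
  set q := p - 1 with hq
  have hqp : q + 1 = p := by omega
  have hq2 : 2 ≤ q := by omega
  have hqe : Even q := by
    rcases hodd with ⟨t, ht⟩; exact ⟨t, by omega⟩
  -- Step: value of each coefficient mod p
  have coeff : ∀ m ∈ Finset.range (q+1),
      ((((-1:ℤ)^m * m.factorial * stirling2 q m : ℤ)) : ZMod p)
        = if m = 0 then 0 else -1 := by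
    intro m hm
    have hmq : m ≤ q := by simpa [Nat.lt_succ_iff] using hm
    rw [stirling2_sum q m]
    push_cast
    have hterm : ∀ l ∈ Finset.range (m+1),
        (-1:ZMod p)^l * (m.choose l : ZMod p) * (l : ZMod p)^q
          = (-1:ZMod p)^l * (m.choose l : ZMod p) * (if l = 0 then 0 else 1) := by
      intro l hl
      congr 1
      rcases eq_or_ne l 0 with rfl | hl0
      · simp [zero_pow (by omega : q ≠ 0)]
      · have hlp : l < p := by
          have := Finset.mem_range.mp hl; omega
        have hne : (l : ZMod p) ≠ 0 := by
          intro h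
          have := ZMod.val_cast_of_lt hlp
          rw [h] at this
          simp at this; exact hl0 this.symm
        rw [if_neg hl0, ZMod.pow_card_sub_one_eq_one hne]
    rw [Finset.sum_congr rfl hterm]
    rcases eq_or_ne m 0 with rfl | hm0
    · simp
    · rw [if_neg hm0]
      have split : ∑ l ∈ Finset.range (m+1),
          (-1:ZMod p)^l * (m.choose l : ZMod p) * (if l = 0 then 0 else 1)
          = (∑ l ∈ Finset.range (m+1), (-1:ZMod p)^l * (m.choose l : ZMod p)) - 1 := by
        have step : ∀ l ∈ Finset.range (m+1),
            (-1:ZMod p)^l * (m.choose l : ZMod p) * (if l = 0 then 0 else 1)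
            = (-1:ZMod p)^l * (m.choose l : ZMod p)
              - (if l = 0 then (-1:ZMod p)^l * (m.choose l : ZMod p) else 0) := by
          intro l hl
          rcases eq_or_ne l 0 with rfl | h0
          · simp
          · rw [if_neg h0, if_neg h0]; ring
        rw [Finset.sum_congr rfl step, Finset.sum_sub_distrib,
          Finset.sum_ite_eq' (Finset.range (m+1)) 0
            (fun l => (-1:ZMod p)^l * (m.choose l : ZMod p)),
          if_pos (Finset.mem_range.mpr (by omega))]
        simp
      rw [split]
      have halt : (∑ l ∈ Finset.range (m+1), (-1:ZMod p)^l * (m.choose l : ZMod p)) = 0 := by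
        have := Int.alternating_sum_range_choose_of_ne hm0
        calc (∑ l ∈ Finset.range (m+1), (-1:ZMod p)^l * (m.choose l : ZMod p))
            = (((∑ l ∈ Finset.range (m+1), (-1:ℤ)^l * (m.choose l)) : ℤ) : ZMod p) := by
              rw [Int.cast_sum]
              refine Finset.sum_congr rfl fun l hl => ?_
              push_cast; ring
          _ = 0 := by rw [this]; simp
      rw [halt]; ring
  -- Step: rewrite B
  rw [polyBernoulliB]
  push_cast
  rw [hqe.neg_one_pow, one_mul]
  have hB : (∑ m ∈ Finset.range (q+1),
        (-1:ZMod p)^m * (m.factorial : ZMod p) * (stirling2 q m : ZMod p) * ((m : ZMod p)+1)^k)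
      = ∑ m ∈ Finset.range (q+1), (if m = 0 then (0:ZMod p) else -1) * ((m : ZMod p)+1)^k := by
    refine Finset.sum_congr rfl fun m hm => ?_
    have := coeff m hm
    push_cast at this
    rw [← this]
    try ring
  rw [hB]
  rw [Finset.sum_range_succ' (fun m => (if m = 0 then (0:ZMod p) else -1) * ((m : ZMod p)+1)^k) q]
  simp only [if_neg (Nat.succ_ne_zero _), if_pos rfl, zero_mul, add_zero]
  have hsum2 : (∑ j ∈ Finset.range q, (-1 : ZMod p) * (((j+1 : ℕ) : ZMod p)+1)^k)
      = -∑ j ∈ Finset.range q, ((j : ZMod p)+2)^k := by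
    rw [← Finset.sum_neg_distrib]
    refine Finset.sum_congr rfl fun j hj => ?_
    push_cast
    try ring
  rw [hsum2]
  -- Step: the shifted sum equals total sum minus 1
  have hshift : (∑ j ∈ Finset.range q, ((j : ZMod p)+2)^k) = (∑ x : ZMod p, x^k) - 1 := by
    have h1 : (∑ i ∈ Finset.range (q+1), ((i : ZMod p)+1)^k) = ∑ x : ZMod p, x^k := by
      rw [hqp, sum_range_cast p (fun x => (x+1)^k)]
      exact Fintype.sum_equiv (Equiv.addRight 1) _ _ (fun x => rfl)
    rw [Finset.sum_range_succ' (fun i => ((i : ZMod p)+1)^k) q] at h1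
    have heq : (∑ j ∈ Finset.range q, (((j+1 : ℕ) : ZMod p)+1)^k) = ∑ j ∈ Finset.range q, ((j : ZMod p)+2)^k := by
      refine Finset.sum_congr rfl fun j hj => ?_
      push_cast
      ring
    rw [heq] at h1
    simp only [Nat.cast_zero, zero_add, one_pow] at h1
    linear_combination h1
  rw [hshift]
  simp

lemma sum_pow_zero_case (p : ℕ) [hpf : Fact p.Prime] (k : ℕ) (h : k = 0 ∨ ¬ (p - 1) ∣ k) :
    ∑ x : ZMod p, x^k = 0 := by
  have hp := hpf.out
  rcases h with rfl | hnd
  · simp only [pow_zero, Finset.sum_const, Finset.card_univ, ZMod.card, nsmul_eq_mul, mul_one]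
    exact ZMod.natCast_self p
  · have hk0 : k ≠ 0 := fun h => hnd (h ▸ dvd_zero _)
    set r := k % (p - 1) with hr
    have hq1 : 1 ≤ p - 1 := by have := hp.two_le; omega
    have hrlt : r < p - 1 := Nat.mod_lt _ (by omega)
    have hr0 : r ≠ 0 := fun h => hnd (Nat.dvd_of_mod_eq_zero h)
    have hxx : ∀ x : ZMod p, x^k = x^r := by
      intro x
      rcases eq_or_ne x 0 with rfl | hx
      · rw [zero_pow hk0, zero_pow hr0]
      · have hk : (p - 1) * (k / (p - 1)) + r = k := by
          rw [hr]; exact Nat.div_add_mod k (p - 1)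
        calc x^k = x^((p-1) * (k / (p-1)) + r) := by rw [hk]
          _ = (x^(p-1))^(k / (p-1)) * x^r := by rw [pow_add, pow_mul]
          _ = x^r := by rw [ZMod.pow_card_sub_one_eq_one hx, one_pow, one_mul]
    rw [Finset.sum_congr rfl (fun x _ => hxx x)]
    have := FiniteField.sum_pow_lt_card_sub_one (K := ZMod p) r (by rw [ZMod.card]; exact hrlt)
    exact this

lemma sum_pow_dvd_case (p : ℕ) [hpf : Fact p.Prime] (k : ℕ) (hk0 : k ≠ 0) (hd : (p - 1) ∣ k) :
    ∑ x : ZMod p, x^k = -1 := by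
  have hp := hpf.out
  obtain ⟨t, rfl⟩ := hd
  have hxx : ∀ x : ZMod p, x^((p-1)*t) = if x = 0 then 0 else 1 := by
    intro x
    rcases eq_or_ne x 0 with rfl | hx
    · rw [if_pos rfl, zero_pow hk0]
    · rw [if_neg hx, pow_mul, ZMod.pow_card_sub_one_eq_one hx, one_pow]
  rw [Finset.sum_congr rfl (fun x _ => hxx x)]
  have step : ∀ x : ZMod p, (if x = 0 then (0:ZMod p) else 1) = 1 - (if x = 0 then 1 else 0) := by
    intro x; rcases eq_or_ne x 0 with rfl | hx
    · simp
    · simp [hx]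
  rw [Finset.sum_congr rfl (fun x _ => step x), Finset.sum_sub_distrib]
  rw [Finset.sum_ite_eq' Finset.univ (0 : ZMod p) (fun _ => (1:ZMod p)), if_pos (Finset.mem_univ _)]
  simp only [Finset.sum_const, Finset.card_univ, ZMod.card, nsmul_eq_mul, mul_one]
  rw [ZMod.natCast_self p]
  ring

theorem polyBernoulliB_pred_prime (p : ℕ) (hp : p.Prime) (hodd : Odd p) (k : ℕ) :
    ((k = 0 ∨ ¬ (p - 1) ∣ k) →
      polyBernoulliB k (p - 1) ≡ 1 [ZMOD (p : ℤ)]) ∧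
    ((k ≠ 0 ∧ (p - 1) ∣ k) →
      polyBernoulliB k (p - 1) ≡ 2 [ZMOD (p : ℤ)]) := by
  haveI : Fact p.Prime := ⟨hp⟩
  constructor
  · intro h
    have := (ZMod.intCast_eq_intCast_iff (polyBernoulliB k (p-1)) 1 p).mp
    apply this
    rw [main_cast p hodd k, sum_pow_zero_case p k h]
    simp
  · rintro ⟨hk0, hd⟩
    have := (ZMod.intCast_eq_intCast_iff (polyBernoulliB k (p-1)) 2 p).mp
    apply this
    rw [main_cast p hodd k, sum_pow_dvd_case p k hk0 hd]
    norm_num
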